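/- Let H be a separable complex Hilbert space, Ψ = {ψ_i}_{i∈I} a Bessel sequence in H with sampling operator A, S a finite-dimensional subspace of H, and Φ = {φ_j}_{j=1}^d a Parseval frame for S. Then A is stable on S with constants α and β if and only if (i) dim(range(G_{Φ,Ψ})) = dim(S) and (ii) σ(G_{Φ,Ψ}* G_{Φ,Ψ}) ⊆ {0} ∪ [α,β], where G_{Φ,Ψ}* G_{Φ,Ψ} is the composition of G_{Φ,Ψ} with its adjoint, an operator on ℂ^d, and σ denotes its spectrum. -/

import Mathlib

open scoped ComplexInnerProductSpace
open ContinuousLinearMap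

section Aux

noncomputable def clmAlgEquiv {E : Type*} [NormedAddCommGroup E] [InnerProductSpace ℂ E]
    [FiniteDimensional ℂ E] : (E →ₗ[ℂ] E) ≃ₐ[ℂ] (E →L[ℂ] E) :=
  { LinearMap.toContinuousLinearMap with
    map_mul' := fun _ _ => rfl
    commutes' := fun _ => rfl }

lemma spectrum_clm_eq {E : Type*} [NormedAddCommGroup E] [InnerProductSpace ℂ E]
    [FiniteDimensional ℂ E] (M : E →L[ℂ] E) :
    spectrum ℂ M = spectrum ℂ (M : E →ₗ[ℂ] E) := by
  have h : M = clmAlgEquiv (M : E →ₗ[ℂ] E) := rfl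
  rw [h]; exact AlgEquiv.spectrum_eq clmAlgEquiv _

lemma mem_spectrum_iff_eigen {E : Type*} [NormedAddCommGroup E] [InnerProductSpace ℂ E]
    [FiniteDimensional ℂ E] (M : E →L[ℂ] E) (lam : ℂ) :
    lam ∈ spectrum ℂ M ↔ ∃ v : E, v ≠ 0 ∧ M v = lam • v := by
  rw [spectrum_clm_eq, ← Module.End.hasEigenvalue_iff_mem_spectrum,
    Module.End.hasEigenvalue_iff, Submodule.ne_bot_iff]
  constructor
  · rintro ⟨v, hv, hv0⟩
    exact ⟨v, hv0, Module.End.mem_eigenspace_iff.mp hv⟩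
  · rintro ⟨v, hv0, hv⟩
    exact ⟨v, Module.End.mem_eigenspace_iff.mpr hv, hv0⟩

lemma eunorm_sq' {ι : Type*} [Fintype ι] (x : EuclideanSpace ℂ ι) :
    ‖x‖ ^ 2 = ∑ j, ‖x j‖ ^ 2 := by
  rw [EuclideanSpace.norm_eq, Real.sq_sqrt]
  positivity

variable {H : Type*} [NormedAddCommGroup H] [InnerProductSpace ℂ H] [CompleteSpace H] {d : ℕ}

noncomputable def synth (φ : Fin d → H) : EuclideanSpace ℂ (Fin d) →L[ℂ] H :=
  LinearMap.toContinuousLinearMap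
    { toFun := fun c => ∑ j, c j • φ j
      map_add' := by
        intro a b
        simp [add_smul, Finset.sum_add_distrib]
      map_smul' := by
        intro m a
        simp [smul_smul, Finset.smul_sum] }

lemma synth_apply (φ : Fin d → H) (c : EuclideanSpace ℂ (Fin d)) :
    synth φ c = ∑ j, c j • φ j := rfl

lemma adjoint_synth_apply (φ : Fin d → H) (h : H) (j : Fin d) :
    (adjoint (synth φ)) h j = ⟪φ j, h⟫ := by
  have h1 : (adjoint (synth φ)) h j
      = ⟪(EuclideanSpace.single j (1:ℂ) : EuclideanSpace ℂ (Fin d)), (adjoint (synth φ)) h⟫ := by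
    rw [EuclideanSpace.inner_single_left]; simp
  rw [h1, adjoint_inner_right]
  have h2 : synth φ (EuclideanSpace.single j (1:ℂ)) = φ j := by
    rw [synth_apply, Finset.sum_eq_single j]
    · simp
    · intro b _ hb
      simp [EuclideanSpace.single_apply, hb]
    · simp
  rw [h2]

variable (φ : Fin d → H) (S : Submodule ℂ H) (hmem : ∀ j, φ j ∈ S)
  (hParseval : ∀ h ∈ S, ∑ j : Fin d, ‖⟪φ j, h⟫‖ ^ 2 = ‖h‖ ^ 2)

include hParseval in
lemma norm_adjoint_synth : ∀ h ∈ S, ‖(adjoint (synth φ)) h‖ = ‖h‖ := by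
  intro h hh
  have key : ‖(adjoint (synth φ)) h‖ ^ 2 = ‖h‖ ^ 2 := by
    rw [eunorm_sq']
    simp_rw [adjoint_synth_apply]
    exact hParseval h hh
  nlinarith [norm_nonneg ((adjoint (synth φ)) h), norm_nonneg h, key]

include hParseval in
lemma inner_adjoint_synth : ∀ h ∈ S, ∀ k ∈ S,
    ⟪(adjoint (synth φ)) h, (adjoint (synth φ)) k⟫ = ⟪h, k⟫ := by
  intro h hh k hk
  let L : S →ₗᵢ[ℂ] EuclideanSpace ℂ (Fin d) :=
    { toLinearMap := (adjoint (synth φ)).toLinearMap.comp S.subtype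
      norm_map' := fun x => norm_adjoint_synth φ S hParseval x x.2 }
  have := L.inner_map_map ⟨h, hh⟩ ⟨k, hk⟩
  exact this

include hmem in
lemma synth_mem (c : EuclideanSpace ℂ (Fin d)) : synth φ c ∈ S := by
  rw [synth_apply]
  exact Submodule.sum_mem S fun j _ => Submodule.smul_mem S _ (hmem j)

include hmem hParseval in
lemma synth_reconstruct : ∀ h ∈ S, synth φ ((adjoint (synth φ)) h) = h := by
  intro h hh
  set w := synth φ ((adjoint (synth φ)) h) - h with hw
  have hwS : w ∈ S := Submodule.sub_mem S (synth_mem φ S hmem _) hh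
  have key : ∀ k ∈ S, ⟪w, k⟫ = 0 := by
    intro k hk
    have h1 : ⟪synth φ ((adjoint (synth φ)) h), k⟫
        = ⟪(adjoint (synth φ)) h, (adjoint (synth φ)) k⟫ := by
      rw [adjoint_inner_right]
    rw [hw, inner_sub_left, h1, inner_adjoint_synth φ S hParseval h hh k hk, sub_self]
  have hw0 : w = 0 := by
    have := key w hwS
    rwa [inner_self_eq_zero] at this
  exact sub_eq_zero.mp hw0

lemma quad_bounds {E : Type*} [NormedAddCommGroup E] [InnerProductSpace ℂ E]
    [FiniteDimensional ℂ E]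
    (M : E →L[ℂ] E) (hsa : IsSelfAdjoint M) (α β : ℝ)
    (hspec : spectrum ℂ M ⊆ (fun t : ℝ => (t : ℂ)) '' ({0} ∪ Set.Icc α β)) (hβ : 0 ≤ β)
    (c : E) (hc : ∀ v, M v = 0 → ⟪v, c⟫ = 0) :
    ∃ r : ℝ, ⟪c, M c⟫ = (r : ℂ) ∧ α * ‖c‖ ^ 2 ≤ r ∧ r ≤ β * ‖c‖ ^ 2 := by
  classical
  set n := Module.finrank ℂ E with hn'
  have hn : Module.finrank ℂ E = n := rfl
  have hsym : (M : E →ₗ[ℂ] E).IsSymmetric := hsa.isSymmetric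
  set b := hsym.eigenvectorBasis hn with hb
  set μ := hsym.eigenvalues hn with hμ
  have hμmem : ∀ i, μ i = 0 ∨ μ i ∈ Set.Icc α β := by
    intro i
    have h1 : Module.End.HasEigenvalue (M : E →ₗ[ℂ] E) (μ i) :=
      hsym.hasEigenvalue_eigenvalues hn i
    have h2 : ((μ i : ℂ)) ∈ spectrum ℂ (M : E →ₗ[ℂ] E) :=
      Module.End.hasEigenvalue_iff_mem_spectrum.mp h1
    rw [← spectrum_clm_eq] at h2
    obtain ⟨t, ht, hteq⟩ := hspec h2
    have h3 : t = μ i := by simpa using hteq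
    rcases ht with ht | ht
    · left; rw [← h3]; exact ht
    · right; rw [← h3] at *; exact ht
  have hrepr : ∀ i, b.repr (M c) i = (μ i : ℂ) * b.repr c i := fun i =>
    hsym.eigenvectorBasis_apply_self_apply hn c i
  have hzero : ∀ i, μ i = 0 → b.repr c i = 0 := by
    intro i hi
    have h1 : M (b i) = 0 := by
      have h2 : M (b i) = ((μ i : ℝ) : ℂ) • b i := hsym.apply_eigenvectorBasis hn i
      rw [hi] at h2
      simpa using h2
    have := hc (b i) h1
    rw [b.repr_apply_apply]
    exact this
  refine ⟨∑ i, μ i * ‖b.repr c i‖ ^ 2, ?_, ?_, ?_⟩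
  · have h1 : ⟪c, M c⟫ = ⟪b.repr c, b.repr (M c)⟫ := (b.repr.inner_map_map c (M c)).symm
    rw [h1, PiLp.inner_apply]
    push_cast
    refine Finset.sum_congr rfl fun i _ => ?_
    rw [hrepr i]
    have h2 : (starRingEnd ℂ) (b.repr c i) * b.repr c i = ((‖b.repr c i‖ : ℂ)) ^ 2 :=
      RCLike.conj_mul _
    calc _
        = (μ i : ℂ) * ((starRingEnd ℂ) (b.repr c i) * b.repr c i) := by
          rw [RCLike.inner_apply]; ring
      _ = (μ i : ℂ) * ((‖b.repr c i‖ : ℂ)) ^ 2 := by rw [h2]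
  · have hnorm : ‖c‖ ^ 2 = ∑ i, ‖b.repr c i‖ ^ 2 := by
      rw [← b.repr.norm_map c, eunorm_sq']
    rw [hnorm, Finset.mul_sum]
    refine Finset.sum_le_sum fun i _ => ?_
    rcases hμmem i with h | h
    · rw [hzero i h, h]; simp
    · have := sq_nonneg ‖b.repr c i‖
      nlinarith [h.1]
  · have hnorm : ‖c‖ ^ 2 = ∑ i, ‖b.repr c i‖ ^ 2 := by
      rw [← b.repr.norm_map c, eunorm_sq']
    rw [hnorm, Finset.mul_sum]
    refine Finset.sum_le_sum fun i _ => ?_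
    rcases hμmem i with h | h
    · rw [h, zero_mul]; nlinarith [hβ, sq_nonneg ‖b.repr c i‖]
    · nlinarith [h.2, sq_nonneg ‖b.repr c i‖]

end Aux

set_option maxHeartbeats 1000000 in
theorem stmt_10
    {H : Type*} [NormedAddCommGroup H] [InnerProductSpace ℂ H] [CompleteSpace H]
    [SecondCountableTopology H]
    {I : Type*} [Countable I]
    (ψ : I → H) (B : ℝ) (hB : 0 < B)
    (hBessel : ∀ h : H, ∑' i : I, ‖⟪ψ i, h⟫‖ ^ 2 ≤ B * ‖h‖ ^ 2)
    (A : H →L[ℂ] lp (fun _ : I => ℂ) 2)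
    (hA : ∀ f : H, ∀ i : I, A f i = ⟪ψ i, f⟫)
    (S : Submodule ℂ H) (hfin : FiniteDimensional ℂ S)
    (d : ℕ) (φ : Fin d → H) (hmem : ∀ j, φ j ∈ S)
    (hParseval : ∀ h ∈ S, ∑ j : Fin d, ‖⟪φ j, h⟫‖ ^ 2 = ‖h‖ ^ 2)
    (G : EuclideanSpace ℂ (Fin d) →L[ℂ] lp (fun _ : I => ℂ) 2)
    (hG : ∀ c : EuclideanSpace ℂ (Fin d), G c = A (∑ j : Fin d, c j • φ j))
    (α β : ℝ) (hα : 0 < α) (hαβ : α ≤ β) :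
    (∀ x₁ ∈ S, ∀ x₂ ∈ S,
        α * ‖x₁ - x₂‖ ^ 2 ≤ ‖A x₁ - A x₂‖ ^ 2 ∧ ‖A x₁ - A x₂‖ ^ 2 ≤ β * ‖x₁ - x₂‖ ^ 2) ↔
      (Module.finrank ℂ (LinearMap.range G.toLinearMap) = Module.finrank ℂ S ∧
        spectrum ℂ ((ContinuousLinearMap.adjoint G).comp G) ⊆
          (fun t : ℝ => (t : ℂ)) '' ({0} ∪ Set.Icc α β)) := by
  classical
  haveI : CompleteSpace S := FiniteDimensional.complete ℂ S
  set T := synth φ with hTdef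
  have hGT : G = A.comp T := by
    refine ContinuousLinearMap.ext fun c => ?_
    rw [hG c]
    rfl
  have hnormTa := norm_adjoint_synth φ S hParseval
  have hrec := synth_reconstruct φ S hmem hParseval
  have hTmem : ∀ c, T c ∈ S := synth_mem φ S hmem
  have hrangeT : LinearMap.range (T : EuclideanSpace ℂ (Fin d) →ₗ[ℂ] H) = S := by
    apply le_antisymm
    · rintro x ⟨c, rfl⟩
      exact hTmem c
    · intro x hx
      exact ⟨adjoint T x, hrec x hx⟩
  set M := (adjoint G).comp G with hM
  have hMsa : IsSelfAdjoint M := by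
    rw [ContinuousLinearMap.isSelfAdjoint_iff', hM, ContinuousLinearMap.adjoint_comp,
      ContinuousLinearMap.adjoint_adjoint]
  have hquad : ∀ c, ⟪c, M c⟫ = ((‖G c‖ : ℂ)) ^ 2 := by
    intro c
    have h1 : ⟪c, M c⟫ = ⟪G c, G c⟫ := adjoint_inner_right G c (G c)
    rw [h1, inner_self_eq_norm_sq_to_K]
    norm_cast
  constructor
  · intro hstab
    have hstab1 : ∀ x ∈ S, α * ‖x‖ ^ 2 ≤ ‖A x‖ ^ 2 ∧ ‖A x‖ ^ 2 ≤ β * ‖x‖ ^ 2 := by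
      intro x hx
      have := hstab x hx 0 (zero_mem S)
      simpa using this
    constructor
    · -- rank condition
      have hinj : Function.Injective (A.toLinearMap.comp S.subtype) := by
        rw [← LinearMap.ker_eq_bot, LinearMap.ker_eq_bot']
        intro x hx0
        have hx := (hstab1 (x : H) x.2).1
        have hx0' : A (x : H) = 0 := hx0
        rw [hx0'] at hx
        simp only [norm_zero] at hx
        have h2 : ‖(x : H)‖ ^ 2 = 0 :=
          le_antisymm (by nlinarith [hα, hx]) (by positivity)
        have hxn : ‖(x : H)‖ = 0 := pow_eq_zero_iff (two_ne_zero) |>.mp h2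
        exact Subtype.ext (norm_eq_zero.mp hxn)
      have h1 : LinearMap.range G.toLinearMap
          = LinearMap.range (A.toLinearMap.comp S.subtype) := by
        have e1 : LinearMap.range G.toLinearMap = LinearMap.range
            (((A.comp T) : EuclideanSpace ℂ (Fin d) →ₗ[ℂ] lp (fun _ : I => ℂ) 2)) := by
          rw [hGT]
        rw [e1, ContinuousLinearMap.toLinearMap_comp, LinearMap.range_comp, LinearMap.range_comp,
          hrangeT, Submodule.range_subtype]
      rw [h1, LinearMap.finrank_range_of_inj hinj]
    · -- spectrum condition
      intro lam hlam
      obtain ⟨v, hv0, hveq⟩ := (mem_spectrum_iff_eigen M lam).mp hlam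
      by_cases hlz : lam = 0
      · exact ⟨0, Or.inl rfl, by simp [hlz]⟩
      · have hMv : M v = adjoint T (adjoint A (G v)) := by
          conv_lhs => rw [hM, hGT]
          rw [ContinuousLinearMap.comp_apply, ContinuousLinearMap.adjoint_comp]
          rw [← hGT]
          rfl
        set h0 : H := adjoint A (G v) with hh0
        set w : H := (S.orthogonalProjectionOnto h0 : H) with hwdef
        have hwS : w ∈ S := (S.orthogonalProjectionOnto h0).2
        have hTstar : adjoint T h0 = adjoint T w := by
          have horth : h0 - w ∈ Sᗮ := Submodule.sub_starProjection_mem_orthogonal (K := S) h0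
          ext j
          rw [hTdef, adjoint_synth_apply, adjoint_synth_apply]
          have h2 : ⟪φ j, h0 - w⟫ = 0 :=
            Submodule.inner_right_of_mem_orthogonal (hmem j) horth
          rw [inner_sub_right] at h2
          linear_combination h2
        set w' : H := lam⁻¹ • w with hw'def
        have hw'S : w' ∈ S := Submodule.smul_mem S _ hwS
        have hveq2 : v = adjoint T w' := by
          have h3 : lam • v = adjoint T w := by
            rw [← hveq, hMv, hTstar]
          rw [hw'def, map_smul, ← h3, smul_smul, inv_mul_cancel₀ hlz, one_smul]
        have hTv : T v = w' := by rw [hveq2]; exact hrec w' hw'S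
        have hnv : ‖v‖ = ‖w'‖ := by rw [hveq2]; exact hnormTa w' hw'S
        have hGv : ‖G v‖ = ‖A w'‖ := by
          rw [hGT, ContinuousLinearMap.comp_apply, hTv]
        have hlam_eq : lam * ((‖v‖ : ℂ)) ^ 2 = ((‖G v‖ : ℂ)) ^ 2 := by
          have h1 := hquad v
          rw [hveq, inner_smul_right, inner_self_eq_norm_sq_to_K] at h1
          exact h1
        have hvn0 : ‖v‖ ≠ 0 := norm_ne_zero_iff.mpr hv0
        have hbounds := hstab1 w' hw'S
        have hv2 : (0:ℝ) < ‖v‖ ^ 2 := pow_pos (lt_of_le_of_ne (norm_nonneg v) (Ne.symm hvn0)) 2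
        refine ⟨‖G v‖ ^ 2 / ‖v‖ ^ 2, Or.inr ⟨?_, ?_⟩, ?_⟩
        · rw [le_div_iff₀ hv2]
          calc α * ‖v‖ ^ 2 = α * ‖w'‖ ^ 2 := by rw [hnv]
            _ ≤ ‖A w'‖ ^ 2 := hbounds.1
            _ = ‖G v‖ ^ 2 := by rw [hGv]
        · rw [div_le_iff₀ hv2]
          calc ‖G v‖ ^ 2 = ‖A w'‖ ^ 2 := by rw [hGv]
            _ ≤ β * ‖w'‖ ^ 2 := hbounds.2
            _ = β * ‖v‖ ^ 2 := by rw [hnv]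
        · have hvc : ((‖v‖ : ℂ)) ^ 2 ≠ 0 := by
            apply pow_ne_zero
            exact_mod_cast hvn0
          have : (lam : ℂ) = ((‖G v‖ ^ 2 / ‖v‖ ^ 2 : ℝ) : ℂ) := by
            push_cast
            rw [eq_div_iff hvc]
            exact hlam_eq
          exact this.symm
  · rintro ⟨hrank, hspec⟩
    -- kernels agree
    have hkle : LinearMap.ker (T : EuclideanSpace ℂ (Fin d) →ₗ[ℂ] H)
        ≤ LinearMap.ker (G : EuclideanSpace ℂ (Fin d) →ₗ[ℂ] lp (fun _ : I => ℂ) 2) := by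
      intro c hc
      rw [LinearMap.mem_ker] at hc ⊢
      have hc' : T c = 0 := hc
      show G c = 0
      rw [hGT, ContinuousLinearMap.comp_apply, hc', map_zero]
    have hker : LinearMap.ker (G : EuclideanSpace ℂ (Fin d) →ₗ[ℂ] lp (fun _ : I => ℂ) 2)
        = LinearMap.ker (T : EuclideanSpace ℂ (Fin d) →ₗ[ℂ] H) := by
      symm
      apply Submodule.eq_of_le_of_finrank_eq hkle
      have h1 := LinearMap.finrank_range_add_finrank_ker
        (T : EuclideanSpace ℂ (Fin d) →ₗ[ℂ] H)
      have h2 := LinearMap.finrank_range_add_finrank_ker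
        (G : EuclideanSpace ℂ (Fin d) →ₗ[ℂ] lp (fun _ : I => ℂ) 2)
      rw [hrangeT] at h1
      have hco : LinearMap.range (G : EuclideanSpace ℂ (Fin d) →ₗ[ℂ] lp (fun _ : I => ℂ) 2)
          = LinearMap.range G.toLinearMap := rfl
      rw [hco, hrank] at h2
      rw [finrank_euclideanSpace_fin] at h1 h2
      omega
    intro x₁ hx₁ x₂ hx₂
    set x : H := x₁ - x₂ with hxdef
    have hxS : x ∈ S := Submodule.sub_mem S hx₁ hx₂
    have hAx : A x₁ - A x₂ = A x := (map_sub A x₁ x₂).symm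
    set c := adjoint T x with hcdef
    have hTc : T c = x := hrec x hxS
    have hnc : ‖c‖ = ‖x‖ := hnormTa x hxS
    have hGc : ‖G c‖ = ‖A x‖ := by
      rw [hGT, ContinuousLinearMap.comp_apply, hTc]
    have hcorth : ∀ v, M v = 0 → ⟪v, c⟫ = 0 := by
      intro v hv
      have hGv : G v = 0 := by
        have h1 := hquad v
        rw [hv] at h1
        simp only [inner_zero_right] at h1
        have : (‖G v‖ : ℂ) ^ 2 = 0 := h1.symm
        have : ‖G v‖ = 0 := by
          have h2 : (‖G v‖ : ℂ) = 0 := by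
            exact pow_eq_zero_iff (by norm_num) |>.mp this
          exact_mod_cast h2
        exact norm_eq_zero.mp this
      have hvker : v ∈ LinearMap.ker (T : EuclideanSpace ℂ (Fin d) →ₗ[ℂ] H) := by
        rw [← hker, LinearMap.mem_ker]
        exact hGv
      have hTv : T v = 0 := hvker
      rw [hcdef, adjoint_inner_right, hTv, inner_zero_left]
    obtain ⟨r, hr, hr1, hr2⟩ := quad_bounds M hMsa α β hspec (le_trans hα.le hαβ) c hcorth
    have hreq : ‖G c‖ ^ 2 = r := by
      have h1 := hquad c
      rw [hr] at h1
      exact_mod_cast h1.symm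
    rw [hAx]
    constructor
    · calc α * ‖x‖ ^ 2 = α * ‖c‖ ^ 2 := by rw [hnc]
        _ ≤ r := hr1
        _ = ‖G c‖ ^ 2 := hreq.symm
        _ = ‖A x‖ ^ 2 := by rw [hGc]
    · calc ‖A x‖ ^ 2 = ‖G c‖ ^ 2 := by rw [hGc]
        _ = r := hreq
        _ ≤ β * ‖c‖ ^ 2 := hr2
        _ = β * ‖x‖ ^ 2 := by rw [hnc]
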